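/- Let M, N be positive integers, let Ω₁, …, Ω_N ∈ ℂ^{M×M} be Hermitian positive definite, and let Γ₁, …, Γ_N ∈ ℂ^{M×M} satisfy Σ_{n=1}^N Γ_n = I. Then Σ_{n=1}^N Γ_nᴴ Ω_n⁻¹ Γ_n ≥ (Σ_{n=1}^N Ω_n)⁻¹ in the Loewner order, with equality if and only if Γ_n = Ω_n (Σ_{ν=1}^N Ω_ν)⁻¹ for every n ∈ {1, …, N}. -/

import Mathlib

open Matrix ComplexOrder

lemma aux_sum_qf {m ι : Type} [Fintype m] [Fintype ι] (f : ι → Matrix m m ℂ) (x : m → ℂ) :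
    ∑ j, star x ⬝ᵥ ((f j) *ᵥ x) = star x ⬝ᵥ ((∑ j, f j) *ᵥ x) := by
  simp only [dotProduct, mulVec, Finset.sum_apply, Finset.mul_sum, Finset.sum_mul]
  rw [Finset.sum_comm]
  refine Finset.sum_congr rfl fun y _ => ?_
  rw [Finset.sum_comm]
  refine Finset.sum_congr rfl fun i _ => ?_
  rw [Matrix.sum_apply, Finset.sum_mul, Finset.mul_sum]

lemma aux_zero {m ι : Type} [Fintype m] [DecidableEq m] [Fintype ι]
    (f : ι → Matrix m m ℂ) (hf : ∀ i, (f i).PosSemidef) (h : ∑ i, f i = 0) (i : ι) : f i = 0 := by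
  have hq : ∀ x : m → ℂ, f i *ᵥ x = 0 := by
    intro x
    rw [← (hf i).dotProduct_mulVec_zero_iff]
    have hsum : ∑ j, star x ⬝ᵥ ((f j) *ᵥ x) = 0 := by
      rw [aux_sum_qf, h]; simp
    exact congrFun ((Fintype.sum_eq_zero_iff_of_nonneg fun j => (hf j).dotProduct_mulVec_nonneg x).mp hsum) i
  ext j k
  simpa using congrFun (hq (Pi.single k 1)) j

lemma aux_psd_sum {m ι : Type} [Fintype m] [Fintype ι] [DecidableEq ι]
    (s : Finset ι) (f : ι → Matrix m m ℂ) (hf : ∀ i ∈ s, (f i).PosSemidef) :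
    (∑ i ∈ s, f i).PosSemidef := by
  induction s using Finset.induction with
  | empty => simpa using Matrix.PosSemidef.zero
  | insert _ _ hni ih =>
      rw [Finset.sum_insert hni]
      exact (hf _ (Finset.mem_insert_self _ _)).add
        (ih fun i hi => hf i (Finset.mem_insert_of_mem hi))

theorem stmt_2 (M N : ℕ) (hM : 0 < M) (hN : 0 < N)
    (Ω : Fin N → Matrix (Fin M) (Fin M) ℂ) (hΩ : ∀ n, (Ω n).PosDef)
    (Γ : Fin N → Matrix (Fin M) (Fin M) ℂ) (hΓ : ∑ n, Γ n = 1) :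
    (∑ n, (Γ n)ᴴ * (Ω n)⁻¹ * Γ n - (∑ n, Ω n)⁻¹).PosSemidef ∧
      (∑ n, (Γ n)ᴴ * (Ω n)⁻¹ * Γ n = (∑ n, Ω n)⁻¹ ↔
        ∀ n, Γ n = Ω n * (∑ ν, Ω ν)⁻¹) := by
  set S : Matrix (Fin M) (Fin M) ℂ := ∑ n, Ω n with hSdef
  have n0 : Fin N := ⟨0, hN⟩
  have hSpd : S.PosDef := by
    rw [hSdef, ← Finset.add_sum_erase _ _ (Finset.mem_univ n0)]
    exact (hΩ n0).add_posSemidef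
      (aux_psd_sum _ _ fun i _ => (hΩ i).posSemidef)
  have hdetS : IsUnit S.det := isUnit_iff_ne_zero.mpr hSpd.det_pos.ne'
  have hdetΩ : ∀ n, IsUnit (Ω n).det := fun n => isUnit_iff_ne_zero.mpr (hΩ n).det_pos.ne'
  have hSinvH : S⁻¹ᴴ = S⁻¹ := hSpd.inv.1
  set D : Fin N → Matrix (Fin M) (Fin M) ℂ := fun n => Γ n - Ω n * S⁻¹ with hDdef
  have hDsum : ∑ n, D n = 0 := by
    simp only [hDdef, Finset.sum_sub_distrib, hΓ, ← Finset.sum_mul, ← hSdef,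
      Matrix.mul_nonsing_inv _ hdetS, sub_self]
  have key : ∑ n, (Γ n)ᴴ * (Ω n)⁻¹ * Γ n - S⁻¹ = ∑ n, (D n)ᴴ * ((Ω n)⁻¹ * D n) := by
    have expand : ∀ n, (Γ n)ᴴ * (Ω n)⁻¹ * Γ n =
        (D n)ᴴ * ((Ω n)⁻¹ * D n) + (D n)ᴴ * S⁻¹ + S⁻¹ * D n + S⁻¹ * (Ω n * S⁻¹) := by
      intro n
      have hΓn : Γ n = D n + Ω n * S⁻¹ := by simp [hDdef]
      rw [hΓn]
      simp only [conjTranspose_add, conjTranspose_mul, hSinvH, (hΩ n).1.eq, add_mul, mul_add,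
        Matrix.mul_assoc, Matrix.nonsing_inv_mul_cancel_left _ _ (hdetΩ n),
        Matrix.mul_nonsing_inv_cancel_left _ _ (hdetΩ n)]
      abel
    rw [Finset.sum_congr rfl fun n _ => expand n]
    have h1 : ∑ n, (D n)ᴴ * S⁻¹ = 0 := by
      rw [← Finset.sum_mul, ← conjTranspose_sum, hDsum]; simp
    have h2 : ∑ n, S⁻¹ * D n = 0 := by
      rw [← Finset.mul_sum, hDsum]; simp
    have h3 : ∑ n, S⁻¹ * (Ω n * S⁻¹) = S⁻¹ := by
      simp only [← Finset.mul_sum, ← Finset.sum_mul, ← hSdef]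
      rw [Matrix.nonsing_inv_mul_cancel_left _ _ hdetS]
    simp only [Finset.sum_add_distrib, h1, h2, h3, add_zero, add_sub_cancel_right]
  -- square-root form
  open scoped MatrixOrder in
  set C : Fin N → Matrix (Fin M) (Fin M) ℂ := fun n => CFC.sqrt (Ω n)⁻¹ with hCdef
  open scoped MatrixOrder in
  have hCC : ∀ n, C n * C n = (Ω n)⁻¹ := fun n =>
    CFC.sqrt_mul_sqrt_self _ (hΩ n).inv.posSemidef.nonneg
  open scoped MatrixOrder in
  have hCH : ∀ n, (C n)ᴴ = C n := fun n => (CFC.sqrt_nonneg _).posSemidef.1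
  have hform : ∀ n, (D n)ᴴ * ((Ω n)⁻¹ * D n) = (C n * D n)ᴴ * (C n * D n) := by
    intro n
    rw [← hCC n, conjTranspose_mul, hCH n, Matrix.mul_assoc, Matrix.mul_assoc]
  have key2 : ∑ n, (Γ n)ᴴ * (Ω n)⁻¹ * Γ n - S⁻¹ = ∑ n, (C n * D n)ᴴ * (C n * D n) := by
    rw [key]; exact Finset.sum_congr rfl fun n _ => hform n
  have hdetC : ∀ n, IsUnit (C n).det := by
    intro n
    have : IsUnit ((C n).det * (C n).det) := by
      rw [← Matrix.det_mul, hCC n]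
      exact isUnit_iff_ne_zero.mpr (hΩ n).inv.det_pos.ne'
    exact isUnit_of_mul_isUnit_left this
  constructor
  · rw [key2]
    exact aux_psd_sum _ _ fun n _ => posSemidef_conjTranspose_mul_self _
  · constructor
    · intro h
      intro n
      have h0 : ∑ n, (C n * D n)ᴴ * (C n * D n) = 0 := by
        rw [← key2, h, sub_self]
      have hEn : C n * D n = 0 :=
        conjTranspose_mul_self_eq_zero.mp
          (aux_zero _ (fun i => posSemidef_conjTranspose_mul_self _) h0 n)
      have hDn : D n = 0 := by
        have := Matrix.nonsing_inv_mul_cancel_left (C n) (D n) (hdetC n)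
        rw [hEn, Matrix.mul_zero] at this
        exact this.symm
      have := sub_eq_zero.mp hDn
      exact this
    · intro h
      have hD0 : ∀ n, D n = 0 := fun n => sub_eq_zero.mpr (h n)
      have : ∑ n, (Γ n)ᴴ * (Ω n)⁻¹ * Γ n - S⁻¹ = 0 := by
        rw [key]
        refine Finset.sum_eq_zero fun n _ => ?_
        rw [hD0 n, Matrix.mul_zero, Matrix.mul_zero]
      exact sub_eq_zero.mp this
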